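/- Let a, b ∈ ℝ^d with a ≠ b, and let c be drawn according to a d-dimensional Gaussian distribution with arbitrary mean and covariance σ²·I. Then the probability that the Euclidean distance from c to the line L(a,b) = {a + ξ(b−a) : ξ ∈ ℝ} is at most ε is bounded above by (ε/σ)^{d−1}. -/

import Mathlib

open MeasureTheory ProbabilityTheory

/-- The `d`-dimensional spherical Gaussian measure with mean `m` and standard deviation `σ`
(covariance `σ² · I`), as a measure on Euclidean space. -/
noncomputable def gaussPi (d : ℕ) (m : EuclideanSpace ℝ (Fin d)) (σ : ℝ) :
    Measure (EuclideanSpace ℝ (Fin d)) :=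
  Measure.map (MeasurableEquiv.toLp 2 (Fin d → ℝ))
    (Measure.pi fun i => gaussianReal (m i) ((σ ^ 2).toNNReal))

open scoped ENNReal NNReal Real

namespace GaussLineAux

/-- Tonelli for a finite product of functions of single coordinates. -/
theorem lintegral_pi_prod : ∀ {n : ℕ} (f : Fin n → ℝ → ℝ≥0∞), (∀ i, Measurable (f i)) →
    ∫⁻ x : Fin n → ℝ, ∏ i, f i (x i) ∂(Measure.pi fun _ => (volume : Measure ℝ)) =
      ∏ i, ∫⁻ t, f i t := by
  intro n
  induction n with
  | zero =>
      intro f hf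
      simp [Measure.pi_univ]
  | succ n ih =>
      intro f hf
      have h2 : Measurable fun y : ℝ × (Fin n → ℝ) => ∏ i, f i.succ (y.2 i) :=
        Finset.measurable_prod _ fun i _ =>
          (hf _).comp ((measurable_pi_apply i).comp measurable_snd)
      have hmp := measurePreserving_piFinSuccAbove (fun _ : Fin (n+1) => (volume : Measure ℝ)) 0
      calc ∫⁻ x : Fin (n+1) → ℝ, ∏ i, f i (x i) ∂(Measure.pi fun _ => (volume : Measure ℝ))
          = ∫⁻ x : Fin (n+1) → ℝ,
              (fun y : ℝ × (Fin n → ℝ) => f 0 y.1 * ∏ i, f i.succ (y.2 i))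
                ((MeasurableEquiv.piFinSuccAbove (fun _ => ℝ) 0) x)
              ∂(Measure.pi fun _ => (volume : Measure ℝ)) := by
            refine lintegral_congr fun x => ?_
            simp [MeasurableEquiv.piFinSuccAbove_apply, Fin.prod_univ_succ,
              Fin.removeNth, Fin.zero_succAbove, Fin.tail]
        _ = ∫⁻ y : ℝ × (Fin n → ℝ), f 0 y.1 * ∏ i, f i.succ (y.2 i)
              ∂((volume : Measure ℝ).prod (Measure.pi fun _ => (volume : Measure ℝ))) :=
            hmp.lintegral_comp (((hf 0).comp measurable_fst).mul h2)
        _ = (∫⁻ t, f 0 t) * ∫⁻ x : Fin n → ℝ, ∏ i, f i.succ (x i)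
              ∂(Measure.pi fun _ => (volume : Measure ℝ)) :=
            lintegral_prod_mul (hf 0).aemeasurable
              (Finset.measurable_prod _ fun i _ =>
                (hf _).comp (measurable_pi_apply i)).aemeasurable
        _ = (∫⁻ t, f 0 t) * ∏ i : Fin n, ∫⁻ t, f i.succ t := by
            rw [ih (fun i => f i.succ) (fun i => hf _)]
        _ = ∏ i, ∫⁻ t, f i t := (Fin.prod_univ_succ fun i => ∫⁻ t, f i t).symm

/-- The product of independent real Gaussians as a density with respect to the product
Lebesgue measure. -/
theorem pi_gauss_eq_withDensity {n : ℕ} (μ : Fin n → ℝ) {v : ℝ≥0} (hv : v ≠ 0) :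
    Measure.pi (fun i => gaussianReal (μ i) v) =
      (Measure.pi fun _ => (volume : Measure ℝ)).withDensity
        (fun x => ∏ i, gaussianPDF (μ i) v (x i)) := by
  refine Measure.pi_eq fun s hs => ?_
  rw [withDensity_apply _ (MeasurableSet.univ_pi hs)]
  have hind : ∀ x : Fin n → ℝ,
      (Set.pi Set.univ s).indicator (fun x => ∏ i, gaussianPDF (μ i) v (x i)) x
        = ∏ i, (s i).indicator (gaussianPDF (μ i) v) (x i) := by
    intro x
    by_cases hx : x ∈ Set.pi Set.univ s
    · rw [Set.indicator_of_mem hx]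
      exact Finset.prod_congr rfl fun i _ =>
        (Set.indicator_of_mem (hx i (Set.mem_univ i)) _).symm
    · rw [Set.indicator_of_notMem hx]
      have hx' : ∃ i, x i ∉ s i := by
        simpa [Set.mem_pi] using hx
      obtain ⟨i, hi⟩ := hx'
      exact (Finset.prod_eq_zero (Finset.mem_univ i)
        (by rw [Set.indicator_of_notMem hi])).symm
  calc ∫⁻ x in Set.pi Set.univ s, ∏ i, gaussianPDF (μ i) v (x i)
        ∂(Measure.pi fun _ => (volume : Measure ℝ))
      = ∫⁻ x, (Set.pi Set.univ s).indicator (fun x => ∏ i, gaussianPDF (μ i) v (x i)) x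
        ∂(Measure.pi fun _ => (volume : Measure ℝ)) :=
        (lintegral_indicator (MeasurableSet.univ_pi hs) _).symm
    _ = ∫⁻ x, ∏ i, (s i).indicator (gaussianPDF (μ i) v) (x i)
        ∂(Measure.pi fun _ => (volume : Measure ℝ)) := lintegral_congr hind
    _ = ∏ i, ∫⁻ t, (s i).indicator (gaussianPDF (μ i) v) t :=
        lintegral_pi_prod _ fun i => (measurable_gaussianPDF _ _).indicator (hs i)
    _ = ∏ i, gaussianReal (μ i) v (s i) := Finset.prod_congr rfl fun i _ => by
        rw [lintegral_indicator (hs i), ← gaussianReal_apply _ hv]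

/-- Pushforward of a `withDensity` measure through a measure-preserving equivalence. -/
theorem map_withDensity_equiv {α β : Type*} [MeasurableSpace α] [MeasurableSpace β]
    (e : α ≃ᵐ β) {μ : Measure α} {ν : Measure β} (hmp : MeasurePreserving e μ ν)
    {g : α → ℝ≥0∞} (hg : Measurable g) :
    Measure.map e (μ.withDensity g) = ν.withDensity (g ∘ e.symm) := by
  ext s hs
  rw [MeasurableEquiv.map_apply, withDensity_apply _ (e.measurable hs),
    withDensity_apply _ hs, ← hmp.map_eq,
    setLIntegral_map hs (hg.comp e.symm.measurable) e.measurable]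
  refine setLIntegral_congr_fun (e.measurable hs) (fun x _ => ?_)
  simp

theorem prod_gaussianPDFReal {n : ℕ} (v : ℝ≥0) (mm c : EuclideanSpace ℝ (Fin n)) :
    ∏ i, gaussianPDFReal (mm i) v (c i)
      = (Real.sqrt (2 * Real.pi * v))⁻¹ ^ n * Real.exp (- ‖c - mm‖ ^ 2 / (2 * v)) := by
  simp_rw [gaussianPDFReal]
  rw [Finset.prod_mul_distrib, Finset.prod_const, Finset.card_univ, Fintype.card_fin,
    ← Real.exp_sum]
  congr 1
  have hnorm : ‖c - mm‖ ^ 2 = ∑ i, (c i - mm i) ^ 2 := by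
    rw [EuclideanSpace.norm_eq, Real.sq_sqrt (by positivity)]
    refine Finset.sum_congr rfl fun i _ => ?_
    rw [PiLp.sub_apply, Real.norm_eq_abs, sq_abs]
  rw [hnorm, neg_div, Finset.sum_div, ← Finset.sum_neg_distrib]
  exact congrArg Real.exp (Finset.sum_congr rfl fun i _ => neg_div _ _)

/-- The product of Gaussian densities only depends on the distance to the mean, hence is
invariant under an orthonormal change of coordinates. -/
theorem prod_gaussianPDF_invariant {n : ℕ} (v : ℝ≥0)
    (B : OrthonormalBasis (Fin n) ℝ (EuclideanSpace ℝ (Fin n)))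
    (mm c : EuclideanSpace ℝ (Fin n)) :
    ∏ i, gaussianPDF (mm i) v (c i)
      = ∏ i, gaussianPDF (B.repr mm i) v (B.repr c i) := by
  simp_rw [gaussianPDF]
  rw [← ENNReal.ofReal_prod_of_nonneg (fun i _ => gaussianPDFReal_nonneg _ _ _),
    ← ENNReal.ofReal_prod_of_nonneg (fun i _ => gaussianPDFReal_nonneg _ _ _)]
  congr 1
  rw [prod_gaussianPDFReal, prod_gaussianPDFReal, ← map_sub, B.repr.norm_map]

/-- Pushing the spherical Gaussian through the coordinates of an orthonormal basis gives a
product of one-dimensional Gaussians with rotated means. -/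
theorem map_pi_gauss {d : ℕ} (m : EuclideanSpace ℝ (Fin d)) {v : ℝ≥0} (hv : v ≠ 0)
    (B : OrthonormalBasis (Fin d) ℝ (EuclideanSpace ℝ (Fin d))) :
    Measure.map ((B.measurableEquiv).trans (MeasurableEquiv.toLp 2 (Fin d → ℝ)).symm)
        (Measure.map (MeasurableEquiv.toLp 2 (Fin d → ℝ))
          (Measure.pi fun i => gaussianReal (m i) v))
      = Measure.pi (fun i => gaussianReal (B.repr m i) v) := by
  set eqv := (MeasurableEquiv.toLp 2 (Fin d → ℝ)).symm
  set Ψ : EuclideanSpace ℝ (Fin d) ≃ᵐ (Fin d → ℝ) := (B.measurableEquiv).trans eqv with hΨ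
  set Φ : (Fin d → ℝ) ≃ᵐ (Fin d → ℝ) := eqv.symm.trans Ψ with hΦ
  have hmap1 : Measure.map (⇑Ψ) (Measure.map (⇑eqv.symm)
      (Measure.pi fun i => gaussianReal (m i) v)) =
      Measure.map (⇑Φ) (Measure.pi fun i => gaussianReal (m i) v) := by
    rw [Measure.map_map Ψ.measurable eqv.symm.measurable]
    rfl
  refine hmap1.trans ?_
  have hvol : (volume : Measure (Fin d → ℝ)) = Measure.pi fun _ => (volume : Measure ℝ) :=
    volume_pi
  have hΦmp : MeasurePreserving (⇑Φ) (Measure.pi fun _ => (volume : Measure ℝ))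
      (Measure.pi fun _ => (volume : Measure ℝ)) := by
    rw [← hvol]
    have h1 : MeasurePreserving (⇑eqv.symm) (volume : Measure (Fin d → ℝ)) volume :=
      (EuclideanSpace.volume_preserving_symm_measurableEquiv_toLp (Fin d)).symm
    have h2 : MeasurePreserving (⇑B.measurableEquiv)
        (volume : Measure (EuclideanSpace ℝ (Fin d))) volume :=
      B.measurePreserving_measurableEquiv
    have h3 : MeasurePreserving (⇑eqv) (volume : Measure (EuclideanSpace ℝ (Fin d))) volume :=
      EuclideanSpace.volume_preserving_symm_measurableEquiv_toLp (Fin d)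
    exact (h3.comp h2).comp h1
  have hGmeas : Measurable fun x : Fin d → ℝ => ∏ i, gaussianPDF (m i) v (x i) :=
    Finset.measurable_prod _ fun i _ => (measurable_gaussianPDF _ _).comp (measurable_pi_apply i)
  rw [pi_gauss_eq_withDensity m hv, map_withDensity_equiv Φ hΦmp hGmeas,
    pi_gauss_eq_withDensity (fun i => B.repr m i) hv]
  congr 1
  funext y
  have hΦsymm : ∀ i, (Φ.symm y) i = (B.repr.symm (eqv.symm y) : EuclideanSpace ℝ (Fin d)) i := by
    intro i
    rfl
  calc (fun x : Fin d → ℝ => ∏ i, gaussianPDF (m i) v (x i)) (Φ.symm y)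
      = ∏ i, gaussianPDF (m i) v ((B.repr.symm (eqv.symm y) : EuclideanSpace ℝ (Fin d)) i) := by
        exact Finset.prod_congr rfl fun i _ => by rw [hΦsymm i]
    _ = ∏ i, gaussianPDF (B.repr m i) v (B.repr (B.repr.symm (eqv.symm y)) i) :=
        prod_gaussianPDF_invariant v B m _
    _ = ∏ i, gaussianPDF (B.repr m i) v (y i) := by
        refine Finset.prod_congr rfl fun i _ => ?_
        rw [LinearIsometryEquiv.apply_symm_apply]
        rfl

theorem sqrt_two_pi_ge_two : (2:ℝ) ≤ Real.sqrt (2 * Real.pi) := by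
  have h4 : (4:ℝ) ≤ 2 * Real.pi := by nlinarith [Real.pi_gt_three]
  calc (2:ℝ) = Real.sqrt 4 := by
        rw [show (4:ℝ) = 2 ^ 2 by norm_num, Real.sqrt_sq (by norm_num)]
    _ ≤ Real.sqrt (2 * Real.pi) := Real.sqrt_le_sqrt h4

/-- A one-dimensional Gaussian with standard deviation `σ` gives mass at most `ε/σ` to any
interval of radius `ε`. -/
theorem gaussianReal_Icc_le {σ ε : ℝ} (hσ : 0 < σ) (hε : 0 ≤ ε) (μ x : ℝ) :
    gaussianReal μ ((σ ^ 2).toNNReal) (Set.Icc (x - ε) (x + ε)) ≤ ENNReal.ofReal (ε / σ) := by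
  set v : ℝ≥0 := (σ ^ 2).toNNReal with hvdef
  have hv : v ≠ 0 := by
    simp only [hvdef, ne_eq, Real.toNNReal_eq_zero, not_le]
    positivity
  have hvcoe : (v : ℝ) = σ ^ 2 := Real.coe_toNNReal _ (sq_nonneg σ)
  rw [gaussianReal_apply _ hv]
  have hbound : ∀ t : ℝ, gaussianPDF μ v t
      ≤ ENNReal.ofReal ((Real.sqrt (2 * Real.pi * v))⁻¹) := by
    intro t
    rw [gaussianPDF]
    refine ENNReal.ofReal_le_ofReal ?_
    rw [gaussianPDFReal]
    nth_rewrite 2 [← mul_one ((Real.sqrt (2 * Real.pi * v))⁻¹)]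
    refine mul_le_mul_of_nonneg_left ?_ (by positivity)
    rw [Real.exp_le_one_iff]
    rw [neg_div]
    exact neg_nonpos.2 (by positivity)
  calc ∫⁻ t in Set.Icc (x - ε) (x + ε), gaussianPDF μ v t
      ≤ ∫⁻ _ in Set.Icc (x - ε) (x + ε),
          ENNReal.ofReal ((Real.sqrt (2 * Real.pi * v))⁻¹) :=
        setLIntegral_mono measurable_const fun t _ => hbound t
    _ = ENNReal.ofReal ((Real.sqrt (2 * Real.pi * v))⁻¹) * volume (Set.Icc (x - ε) (x + ε)) :=
        setLIntegral_const _ _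
    _ ≤ ENNReal.ofReal (ε / σ) := by
        rw [Real.volume_Icc, show x + ε - (x - ε) = 2 * ε by ring,
          ← ENNReal.ofReal_mul (by positivity)]
        refine ENNReal.ofReal_le_ofReal ?_
        have hsq : Real.sqrt (2 * Real.pi * v) = Real.sqrt (2 * Real.pi) * σ := by
          rw [hvcoe, Real.sqrt_mul (by positivity), Real.sqrt_sq hσ.le]
        have h2 : (2 : ℝ) * σ ≤ Real.sqrt (2 * Real.pi * v) := by
          rw [hsq]
          exact mul_le_mul_of_nonneg_right sqrt_two_pi_ge_two hσ.le
        have hpos : (0:ℝ) < 2 * σ := by positivity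
        have hinv : (Real.sqrt (2 * Real.pi * v))⁻¹ ≤ (2 * σ)⁻¹ :=
          inv_anti₀ hpos h2
        calc (Real.sqrt (2 * Real.pi * v))⁻¹ * (2 * ε) ≤ (2 * σ)⁻¹ * (2 * ε) :=
              mul_le_mul_of_nonneg_right hinv (by positivity)
          _ = ε / σ := by field_simp

end GaussLineAux

open GaussLineAux

/-- If `c` is drawn from a `d`-dimensional spherical Gaussian with arbitrary mean and standard
deviation `σ`, and `a ≠ b`, then the probability that `c` is within distance `ε` of the line
through `a` and `b` is at most `(ε/σ)^(d-1)`. -/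
theorem stmt1 (d : ℕ) (hd : 2 ≤ d) (σ ε : ℝ) (hσ : 0 < σ) (hε : 0 ≤ ε)
    (m a b : EuclideanSpace ℝ (Fin d)) (hab : a ≠ b) :
    gaussPi d m σ
        {c | Metric.infDist c {p | ∃ ξ : ℝ, p = a + ξ • (b - a)} ≤ ε}
      ≤ ENNReal.ofReal ((ε / σ) ^ (d - 1)) := by
  classical
  haveI : NeZero d := ⟨by omega⟩
  set v : ℝ≥0 := (σ ^ 2).toNNReal with hvdef
  have hv : v ≠ 0 := by
    simp only [hvdef, ne_eq, Real.toNNReal_eq_zero, not_le]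
    positivity
  have hba : b - a ≠ 0 := sub_ne_zero.2 (Ne.symm hab)
  set u : EuclideanSpace ℝ (Fin d) := ‖b - a‖⁻¹ • (b - a) with hudef
  have hu : ‖u‖ = 1 := norm_smul_inv_norm hba
  have hON : Orthonormal ℝ (({0} : Set (Fin d)).restrict (fun _ : Fin d => u)) := by
    constructor
    · intro i
      exact hu
    · intro i j hij
      exact absurd (Subtype.ext (i.2.trans j.2.symm)) hij
  obtain ⟨B, hB⟩ := hON.exists_orthonormalBasis_extension_of_card_eq (by simp)
  have hB0 : B 0 = u := hB 0 rfl
  set L : Set (EuclideanSpace ℝ (Fin d)) := {p | ∃ ξ : ℝ, p = a + ξ • (b - a)} with hLdef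
  have hLne : L.Nonempty := ⟨a, 0, by simp⟩
  -- geometric key: the event is contained in a cube in rotated coordinates
  have hkey : ∀ c, Metric.infDist c L ≤ ε →
      ∀ j : Fin d, j ≠ 0 → |B.repr c j - B.repr a j| ≤ ε := by
    intro c hc j hj
    have horth : (inner ℝ (B j) (b - a) : ℝ) = 0 := by
      have h0 : (inner ℝ (B j) (B 0) : ℝ) = 0 := B.orthonormal.2 hj
      rw [hB0, hudef, real_inner_smul_right] at h0
      have hnorm : ‖b - a‖⁻¹ ≠ 0 := inv_ne_zero (norm_ne_zero_iff.2 hba)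
      exact (mul_eq_zero.1 h0).resolve_left hnorm
    have hle : ∀ p ∈ L, |B.repr c j - B.repr a j| ≤ dist c p := by
      rintro p ⟨ξ, rfl⟩
      have h1 : (inner ℝ (B j) (c - (a + ξ • (b - a))) : ℝ) = B.repr c j - B.repr a j := by
        rw [inner_sub_right, inner_add_right, real_inner_smul_right, horth, mul_zero,
          add_zero, OrthonormalBasis.repr_apply_apply, OrthonormalBasis.repr_apply_apply]
      rw [← h1, dist_eq_norm]
      calc |(inner ℝ (B j) (c - (a + ξ • (b - a))) : ℝ)|
          ≤ ‖B j‖ * ‖c - (a + ξ • (b - a))‖ := abs_real_inner_le_norm _ _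
        _ = ‖c - (a + ξ • (b - a))‖ := by rw [B.orthonormal.1 j, one_mul]
    have h2 : |B.repr c j - B.repr a j| ≤ Metric.infDist c L := by
      by_contra h
      push_neg at h
      obtain ⟨p, hp, hdp⟩ := (Metric.infDist_lt_iff hLne).1 h
      exact absurd hdp (not_lt.2 (hle p hp))
    linarith
  set α : EuclideanSpace ℝ (Fin d) := B.repr a with hαdef
  set T : Set (Fin d → ℝ) :=
    Set.pi Set.univ (fun j => if j = 0 then Set.univ else Set.Icc (α j - ε) (α j + ε)) with hTdef
  set Ψ : EuclideanSpace ℝ (Fin d) ≃ᵐ (Fin d → ℝ) :=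
    (B.measurableEquiv).trans (MeasurableEquiv.toLp 2 (Fin d → ℝ)).symm with hΨdef
  have hΨc : ∀ (c : EuclideanSpace ℝ (Fin d)) (j : Fin d), Ψ c j = B.repr c j := fun _ _ => rfl
  have hsub : {c | Metric.infDist c L ≤ ε} ⊆ Ψ ⁻¹' T := by
    intro c hc
    intro j _
    dsimp only
    split_ifs with h
    · trivial
    · have habs := hkey c hc j h
      rw [abs_le] at habs
      rw [hΨc c j]
      exact ⟨by linarith [habs.1], by linarith [habs.2]⟩
  calc gaussPi d m σ {c | Metric.infDist c L ≤ ε}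
      ≤ gaussPi d m σ (Ψ ⁻¹' T) := measure_mono hsub
    _ = (Measure.map Ψ (gaussPi d m σ)) T := (MeasurableEquiv.map_apply Ψ T).symm
    _ = Measure.pi (fun i => gaussianReal (B.repr m i) v) T := by
        rw [hΨdef]
        exact congrFun (congrArg _ (map_pi_gauss m hv B)) T
    _ = ∏ j, gaussianReal (B.repr m j) v
          (if j = 0 then Set.univ else Set.Icc (α j - ε) (α j + ε)) := Measure.pi_pi _ _
    _ ≤ ∏ j : Fin d, (if j = 0 then 1 else ENNReal.ofReal (ε / σ)) := by
        refine Finset.prod_le_prod' fun j _ => ?_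
        split_ifs with h
        · exact le_of_eq measure_univ
        · exact gaussianReal_Icc_le hσ hε _ _
    _ = ENNReal.ofReal (ε / σ) ^ (d - 1) := by
        rw [Finset.prod_ite, Finset.prod_const, Finset.prod_const, one_pow, one_mul]
        congr 1
        rw [Finset.filter_ne', Finset.card_erase_of_mem (Finset.mem_univ _), Finset.card_univ,
          Fintype.card_fin]
    _ = ENNReal.ofReal ((ε / σ) ^ (d - 1)) :=
        (ENNReal.ofReal_pow (div_nonneg hε hσ.le) _).symm
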